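/- Let 𝔙 be a regular vessel with d = 2 and generalized NLS parameters σ1 = I, σ2 = diag(a,−a) with a ≠ 0, γ = [[γ11, γ12],[γ21, −γ11]], and write H_0(x,t) = [[h11, h12],[h21, h22]]. Then the linkage condition gives γ_*(x,t) = [[γ11, γ12 + 2a·h12],[γ21 − 2a·h21, −γ11]], and the diagonal entries of the moment recurrence for n = 0 give on Ω: ∂_x h11 − ∂_x h22 = 2(2a·h12·h21 − γ21·h12 + γ12·h21). -/

import Mathlib

noncomputable section

open ContinuousLinearMap

/-- The coefficient space `ℂ^d`. -/
abbrev Ed (d : ℕ) : Type := EuclideanSpace ℂ (Fin d)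

/-- A `d × d` complex matrix viewed as a continuous linear map on `ℂ^d`. -/
def m2c {d : ℕ} (σ : Matrix (Fin d) (Fin d) ℂ) : Ed d →L[ℂ] Ed d :=
  Matrix.toEuclideanCLM (𝕜 := ℂ) σ

/-- A continuous linear map on `ℂ^d` viewed as a `d × d` complex matrix. -/
def c2m {d : ℕ} (T : Ed d →L[ℂ] Ed d) : Matrix (Fin d) (Fin d) ℂ :=
  (Matrix.toEuclideanCLM (𝕜 := ℂ)).symm T

/-- Partial derivative in the first (space) variable. -/
def pdx {M : Type*} [NormedAddCommGroup M] [NormedSpace ℝ M]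
    (F : ℝ × ℝ → M) (p : ℝ × ℝ) : M :=
  deriv (fun x => F (x, p.2)) p.1

/-- Partial derivative in the second (time) variable. -/
def pdt {M : Type*} [NormedAddCommGroup M] [NormedSpace ℝ M]
    (F : ℝ × ℝ → M) (p : ℝ × ℝ) : M :=
  deriv (fun t => F (p.1, t)) p.2

/-- Entrywise partial derivative in `x` of a matrix-valued function. -/
def pdxM {d : ℕ} (F : ℝ × ℝ → Matrix (Fin d) (Fin d) ℂ) (p : ℝ × ℝ) :
    Matrix (Fin d) (Fin d) ℂ :=
  Matrix.of fun i j => pdx (fun q => F q i j) p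

/-- Entrywise partial derivative in `t` of a matrix-valued function. -/
def pdtM {d : ℕ} (F : ℝ × ℝ → Matrix (Fin d) (Fin d) ℂ) (p : ℝ × ℝ) :
    Matrix (Fin d) (Fin d) ℂ :=
  Matrix.of fun i j => pdt (fun q => F q i j) p

/-- A regular vessel with inner (Krein/Hilbert) space `K` and coefficient space `ℂ^d`. -/
structure Vessel (K : Type*) [NormedAddCommGroup K] [InnerProductSpace ℂ K]
    [CompleteSpace K] (d : ℕ) where
  Ω : Set (ℝ × ℝ)
  hΩ : IsOpen Ω
  A : K →L[ℂ] K
  Aζ : K →L[ℂ] K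
  B : ℝ × ℝ → Ed d →L[ℂ] K
  C : ℝ × ℝ → K →L[ℂ] Ed d
  X : ℝ × ℝ → K →L[ℂ] K
  /-- pointwise inverse of `X` -/
  Xi : ℝ × ℝ → K →L[ℂ] K
  σ1 : Matrix (Fin d) (Fin d) ℂ
  σ2 : Matrix (Fin d) (Fin d) ℂ
  γ : Matrix (Fin d) (Fin d) ℂ
  γs : ℝ × ℝ → Matrix (Fin d) (Fin d) ℂ
  hσ1 : IsUnit σ1
  smoothB : ContDiffOn ℝ 2 B Ω
  smoothC : ContDiffOn ℝ 2 C Ω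
  smoothX : ContDiffOn ℝ 2 X Ω
  hXinv : ∀ p ∈ Ω, X p ∘L Xi p = (1 : K →L[ℂ] K) ∧ Xi p ∘L X p = (1 : K →L[ℂ] K)
  eqBx : ∀ p ∈ Ω,
    pdx B p ∘L m2c σ1 + A ∘L B p ∘L m2c σ2 + B p ∘L m2c γ = 0
  eqBt : ∀ p ∈ Ω, pdt B p = Complex.I • (A ∘L pdx B p)
  eqCx : ∀ p ∈ Ω,
    m2c σ1 ∘L pdx C p + m2c σ2 ∘L C p ∘L Aζ - m2c γ ∘L C p = 0
  eqCt : ∀ p ∈ Ω, pdt C p = (-Complex.I) • (pdx C p ∘L Aζ)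
  eqXx : ∀ p ∈ Ω, pdx X p = B p ∘L m2c σ2 ∘L C p
  eqXt : ∀ p ∈ Ω, pdt X p =
    Complex.I • (A ∘L B p ∘L m2c σ2 ∘L C p) -
      Complex.I • (B p ∘L m2c σ2 ∘L C p ∘L Aζ) +
      Complex.I • (B p ∘L m2c γ ∘L C p)
  eqLyap : ∀ p ∈ Ω, A ∘L X p + X p ∘L Aζ + B p ∘L m2c σ1 ∘L C p = 0
  eqLink : ∀ p ∈ Ω, γs p =
    γ + σ2 * c2m (C p ∘L Xi p ∘L B p) * σ1 - σ1 * c2m (C p ∘L Xi p ∘L B p) * σ2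

/-- The `n`-th moment `H_n = C 𝕏⁻¹ Aⁿ B` of a vessel, as a `d × d` matrix. -/
def Vessel.H {K : Type*} [NormedAddCommGroup K] [InnerProductSpace ℂ K]
    [CompleteSpace K] {d : ℕ} (V : Vessel K d) (n : ℕ) (p : ℝ × ℝ) :
    Matrix (Fin d) (Fin d) ℂ :=
  c2m (V.C p ∘L V.Xi p ∘L (V.A ^ n) ∘L V.B p)


section AuxLemmas

lemma slice_hasDerivAt {M : Type*} [NormedAddCommGroup M] [NormedSpace ℝ M]
    {F : ℝ × ℝ → M} {Ω : Set (ℝ × ℝ)} (hΩ : IsOpen Ω) (hF : ContDiffOn ℝ 2 F Ω)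
    {p : ℝ × ℝ} (hp : p ∈ Ω) : HasDerivAt (fun x => F (x, p.2)) (pdx F p) p.1 := by
  have h1 : DifferentiableAt ℝ F p :=
    (hF.contDiffAt (hΩ.mem_nhds hp)).differentiableAt two_ne_zero
  have hincl : DifferentiableAt ℝ (fun x : ℝ => (x, p.2)) p.1 :=
    differentiableAt_id.prodMk (differentiableAt_const _)
  have h2 : DifferentiableAt ℝ (fun x : ℝ => F (x, p.2)) p.1 := h1.comp p.1 hincl
  exact h2.hasDerivAt

lemma isBBM_compC {E F G : Type*} [NormedAddCommGroup E] [NormedSpace ℂ E]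
    [NormedAddCommGroup F] [NormedSpace ℂ F] [NormedAddCommGroup G] [NormedSpace ℂ G] :
    IsBoundedBilinearMap ℝ (fun p : (F →L[ℂ] G) × (E →L[ℂ] F) => p.1.comp p.2) := by
  constructor
  · intro f f' g; exact ContinuousLinearMap.add_comp f f' g
  · intro r f g; exact ContinuousLinearMap.smul_comp r f g
  · intro f g g'; exact ContinuousLinearMap.comp_add f g g'
  · intro r f g; exact ContinuousLinearMap.comp_smul f r g
  · exact ⟨1, one_pos, fun f g => by simpa using ContinuousLinearMap.opNorm_comp_le f g⟩

lemma HasDerivAt.clm_compC {E F G : Type*} [NormedAddCommGroup E] [NormedSpace ℂ E]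
    [NormedAddCommGroup F] [NormedSpace ℂ F] [NormedAddCommGroup G] [NormedSpace ℂ G]
    {c : ℝ → F →L[ℂ] G} {c' : F →L[ℂ] G} {d : ℝ → E →L[ℂ] F} {d' : E →L[ℂ] F} {x : ℝ}
    (hc : HasDerivAt c c' x) (hd : HasDerivAt d d' x) :
    HasDerivAt (fun y => (c y).comp (d y)) ((c'.comp (d x)) + ((c x).comp d')) x := by
  have hb := (isBBM_compC (E := E) (F := F) (G := G)).hasFDerivAt (c x, d x)
  have h := hb.comp_hasDerivAt x (hc.prodMk hd)
  have h2 : HasDerivAt (fun y => (c y).comp (d y))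
      ((isBBM_compC (E := E) (F := F) (G := G)).deriv (c x, d x) (c', d')) x := h
  simpa [IsBoundedBilinearMap.deriv_apply, add_comm] using h2

lemma one_compL {E F : Type*} [NormedAddCommGroup E] [NormedSpace ℂ E]
    [NormedAddCommGroup F] [NormedSpace ℂ F] (f : E →L[ℂ] F) :
    (1 : F →L[ℂ] F).comp f = f := by
  rw [ContinuousLinearMap.one_def, ContinuousLinearMap.id_comp]

lemma comp_oneL {E F : Type*} [NormedAddCommGroup E] [NormedSpace ℂ E]
    [NormedAddCommGroup F] [NormedSpace ℂ F] (f : E →L[ℂ] F) :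
    f.comp (1 : E →L[ℂ] E) = f := by
  rw [ContinuousLinearMap.one_def, ContinuousLinearMap.comp_id]

lemma c2m_add {d : ℕ} (S T : Ed d →L[ℂ] Ed d) : c2m (S + T) = c2m S + c2m T := by
  simp [c2m]

lemma c2m_sub {d : ℕ} (S T : Ed d →L[ℂ] Ed d) : c2m (S - T) = c2m S - c2m T := by
  simp [c2m]

lemma c2m_comp {d : ℕ} (S T : Ed d →L[ℂ] Ed d) : c2m (S ∘L T) = c2m S * c2m T := by
  rw [← ContinuousLinearMap.mul_def]; simp [c2m]

lemma c2m_m2c {d : ℕ} (M : Matrix (Fin d) (Fin d) ℂ) : c2m (m2c M) = M := by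
  simp [c2m, m2c]

lemma m2c_one {d : ℕ} : m2c (1 : Matrix (Fin d) (Fin d) ℂ) = 1 := by simp [m2c]

def entryL (i j : Fin 2) : (Ed 2 →L[ℂ] Ed 2) →ₗ[ℝ] ℂ where
  toFun T := c2m T i j
  map_add' S T := by simp [c2m, Matrix.add_apply]
  map_smul' r T := by
    have h : r • T = (r : ℂ) • T := by norm_cast
    rw [h]
    simp [c2m, Matrix.smul_apply, Complex.real_smul]

def entryCLM (i j : Fin 2) : (Ed 2 →L[ℂ] Ed 2) →L[ℝ] ℂ :=
  LinearMap.toContinuousLinearMap (entryL i j)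

lemma entryCLM_apply (i j : Fin 2) (T : Ed 2 →L[ℂ] Ed 2) : entryCLM i j T = c2m T i j := rfl

end AuxLemmas

set_option maxHeartbeats 2000000 in
/-- linkage condition and the diagonal moment relations for a vessel
with generalized NLS parameters. -/
theorem NLS_linkage_and_diagonal {K : Type*} [NormedAddCommGroup K]
    [InnerProductSpace ℂ K] [CompleteSpace K]
    (V : Vessel K 2) (a γ11 γ12 γ21 : ℂ) (ha : a ≠ 0)
    (hσ1 : V.σ1 = 1) (hσ2 : V.σ2 = !![a, 0; 0, -a])
    (hγ : V.γ = !![γ11, γ12; γ21, -γ11]) :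
    ∀ p ∈ V.Ω,
      V.γs p = !![γ11, γ12 + 2 * a * V.H 0 p 0 1;
                  γ21 - 2 * a * V.H 0 p 1 0, -γ11] ∧
      pdx (fun q => V.H 0 q 0 0) p - pdx (fun q => V.H 0 q 1 1) p =
        2 * (2 * a * V.H 0 p 0 1 * V.H 0 p 1 0 -
          γ21 * V.H 0 p 0 1 + γ12 * V.H 0 p 1 0) := by
  intro p hp
  obtain ⟨hx1, hx2⟩ := V.hXinv p hp
  have hσm : m2c V.σ1 = 1 := by rw [hσ1]; exact m2c_one
  have hH0p : V.H 0 p = c2m (V.C p ∘L (V.Xi p ∘L V.B p)) := by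
    simp [Vessel.H, pow_zero, one_compL]
  constructor
  · -- linkage
    have hlink := V.eqLink p hp
    rw [hσ1, hγ, hσ2] at hlink
    have hcc : c2m (V.C p ∘L V.Xi p ∘L V.B p) = V.H 0 p := by
      rw [hH0p]
    rw [hlink, hcc]
    set H := V.H 0 p with hH
    rw [Matrix.eta_fin_two H]
    ext i j
    fin_cases i <;> fin_cases j <;>
      simp [Matrix.mul_apply, Fin.sum_univ_two] <;> ring
  · -- moment relation
    -- derivatives of the slices
    have hBd := slice_hasDerivAt V.hΩ V.smoothB hp
    have hCd := slice_hasDerivAt V.hΩ V.smoothC hp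
    have hXd := slice_hasDerivAt V.hΩ V.smoothX hp
    -- X p is a unit with inverse Xi p
    have hu1 : V.X p * V.Xi p = 1 := by rw [ContinuousLinearMap.mul_def]; exact hx1
    have hu2 : V.Xi p * V.X p = 1 := by rw [ContinuousLinearMap.mul_def]; exact hx2
    -- derivative of Xi
    have hXieq : (fun x => V.Xi (x, p.2)) =ᶠ[nhds p.1]
        (fun x => Ring.inverse (V.X (x, p.2))) := by
      have hc : Continuous (fun x : ℝ => ((x, p.2) : ℝ × ℝ)) :=
        continuous_id.prodMk continuous_const
      have hps : ∀ᶠ x in nhds p.1, ((x, p.2) : ℝ × ℝ) ∈ V.Ω :=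
        (hc.continuousAt (x := p.1)).preimage_mem_nhds (V.hΩ.mem_nhds (by simpa using hp))
      filter_upwards [hps] with x hx
      obtain ⟨a1, a2⟩ := V.hXinv _ hx
      have e1 : V.X (x, p.2) * V.Xi (x, p.2) = 1 := by
        rw [ContinuousLinearMap.mul_def]; exact a1
      have e2 : V.Xi (x, p.2) * V.X (x, p.2) = 1 := by
        rw [ContinuousLinearMap.mul_def]; exact a2
      exact (Ring.inverse_unit ⟨V.X (x, p.2), V.Xi (x, p.2), e1, e2⟩).symm
    have hXid : HasDerivAt (fun x => V.Xi (x, p.2))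
        (-(V.Xi p * pdx V.X p * V.Xi p)) p.1 := by
      set u : (K →L[ℂ] K)ˣ := ⟨V.X p, V.Xi p, hu1, hu2⟩ with hudef
      have hf : HasFDerivAt Ring.inverse
          (-(ContinuousLinearMap.mulLeftRight ℂ (K →L[ℂ] K) ↑u⁻¹ ↑u⁻¹)) (V.X p) :=
        hasFDerivAt_ringInverse u
      have h2 := (hf.restrictScalars ℝ).comp_hasDerivAt p.1 hXd
      have h3 := h2.congr_of_eventuallyEq hXieq
      simpa [Function.comp, ContinuousLinearMap.mulLeftRight_apply, hudef] using h3
    -- derivative of the product C (Xi B)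
    have hinner := hXid.clm_compC hBd
    have hFd := hCd.clm_compC hinner
    set D : Ed 2 →L[ℂ] Ed 2 :=
      (pdx V.C p).comp ((V.Xi p).comp (V.B p)) +
        (V.C p).comp ((-(V.Xi p * pdx V.X p * V.Xi p)).comp (V.B p) +
          (V.Xi p).comp (pdx V.B p)) with hDdef
    have hFd' : HasDerivAt
        (fun x => (V.C (x, p.2)).comp ((V.Xi (x, p.2)).comp (V.B (x, p.2)))) D p.1 := hFd
    -- entries
    have hent : ∀ i j : Fin 2, pdx (fun q => V.H 0 q i j) p = c2m D i j := by
      intro i j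
      have h1 := ((entryCLM i j).hasFDerivAt).comp_hasDerivAt p.1 hFd'
      have h2 : (fun x => entryCLM i j
          ((V.C (x, p.2)).comp ((V.Xi (x, p.2)).comp (V.B (x, p.2))))) =
          (fun x => V.H 0 (x, p.2) i j) := by
        funext x
        simp [entryCLM_apply, Vessel.H, pow_zero, one_compL]
      rw [Function.comp_def, h2] at h1
      exact h1.deriv
    -- vessel equations at p
    have hCx : pdx V.C p =
        m2c V.γ ∘L V.C p - m2c V.σ2 ∘L (V.C p ∘L V.Aζ) := by
      have h := V.eqCx p hp
      rw [hσm] at h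
      rw [show (1 : Ed 2 →L[ℂ] Ed 2).comp (pdx V.C p) = pdx V.C p from one_compL _] at h
      calc pdx V.C p
          = (pdx V.C p + m2c V.σ2 ∘L V.C p ∘L V.Aζ - m2c V.γ ∘L V.C p)
            + m2c V.γ ∘L V.C p - m2c V.σ2 ∘L (V.C p ∘L V.Aζ) := by abel
        _ = m2c V.γ ∘L V.C p - m2c V.σ2 ∘L (V.C p ∘L V.Aζ) := by rw [h]; abel
    have hBx : pdx V.B p =
        -(V.A ∘L V.B p ∘L m2c V.σ2) - V.B p ∘L m2c V.γ := by
      have h := V.eqBx p hp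
      rw [hσm] at h
      rw [show (pdx V.B p).comp (1 : Ed 2 →L[ℂ] Ed 2) = pdx V.B p from comp_oneL _] at h
      calc pdx V.B p
          = (pdx V.B p + V.A ∘L V.B p ∘L m2c V.σ2 + V.B p ∘L m2c V.γ)
            - V.A ∘L V.B p ∘L m2c V.σ2 - V.B p ∘L m2c V.γ := by abel
        _ = -(V.A ∘L V.B p ∘L m2c V.σ2) - V.B p ∘L m2c V.γ := by rw [h]; abel
    have hXx := V.eqXx p hp
    -- Lyapunov consequence
    have hLm : V.A * V.X p + V.X p * V.Aζ + (V.B p ∘L V.C p) = 0 := by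
      have h := V.eqLyap p hp
      rw [hσm] at h
      rw [show (1 : Ed 2 →L[ℂ] Ed 2).comp (V.C p) = V.C p from one_compL _] at h
      simpa [ContinuousLinearMap.mul_def] using h
    have e1 : V.X p * V.Aζ = -(V.A * V.X p) - (V.B p ∘L V.C p) := by
      calc V.X p * V.Aζ
          = (V.A * V.X p + V.X p * V.Aζ + (V.B p ∘L V.C p))
            - V.A * V.X p - (V.B p ∘L V.C p) := by abel
        _ = -(V.A * V.X p) - (V.B p ∘L V.C p) := by rw [hLm]; abel
    have e2 : V.Aζ * V.Xi p =
        -(V.Xi p * V.A) - V.Xi p * ((V.B p ∘L V.C p) * V.Xi p) := by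
      calc V.Aζ * V.Xi p = V.Xi p * ((V.X p * V.Aζ) * V.Xi p) := by
            rw [← mul_assoc, ← mul_assoc, hu2, one_mul]
        _ = V.Xi p * ((-(V.A * V.X p) - (V.B p ∘L V.C p)) * V.Xi p) := by rw [e1]
        _ = -(V.Xi p * V.A) - V.Xi p * ((V.B p ∘L V.C p) * V.Xi p) := by
            rw [sub_mul, neg_mul, mul_assoc V.A, hu1, mul_one, mul_sub, mul_neg]
    have e2c : V.Aζ ∘L V.Xi p =
        -(V.Xi p ∘L V.A) - V.Xi p ∘L ((V.B p ∘L V.C p) ∘L V.Xi p) := by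
      simpa [ContinuousLinearMap.mul_def] using e2
    have hZYB : V.Aζ ∘L (V.Xi p ∘L V.B p) =
        -(V.Xi p ∘L (V.A ∘L V.B p)) -
          V.Xi p ∘L (V.B p ∘L (V.C p ∘L (V.Xi p ∘L V.B p))) := by
      have h := congrArg (fun T => T ∘L V.B p) e2c
      simpa [ContinuousLinearMap.comp_assoc, ContinuousLinearMap.sub_comp,
        ContinuousLinearMap.neg_comp] using h
    -- the CLM-level identity
    set P : Ed 2 →L[ℂ] Ed 2 := V.C p ∘L (V.Xi p ∘L V.B p) with hPdef
    set Q : Ed 2 →L[ℂ] Ed 2 := V.C p ∘L (V.Xi p ∘L (V.A ∘L V.B p)) with hQdef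
    have hDc : D = m2c V.γ ∘L P - P ∘L m2c V.γ + m2c V.σ2 ∘L Q - Q ∘L m2c V.σ2
        + m2c V.σ2 ∘L (P ∘L P) - P ∘L (m2c V.σ2 ∘L P) := by
      rw [hDdef, hCx, hBx, hXx, hPdef, hQdef]
      simp only [ContinuousLinearMap.mul_def, ContinuousLinearMap.comp_assoc,
        ContinuousLinearMap.add_comp, ContinuousLinearMap.comp_add,
        ContinuousLinearMap.sub_comp, ContinuousLinearMap.comp_sub,
        ContinuousLinearMap.neg_comp, ContinuousLinearMap.comp_neg]
      rw [hZYB]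
      simp only [ContinuousLinearMap.comp_assoc, ContinuousLinearMap.add_comp,
        ContinuousLinearMap.comp_add, ContinuousLinearMap.sub_comp,
        ContinuousLinearMap.comp_sub, ContinuousLinearMap.neg_comp,
        ContinuousLinearMap.comp_neg]
      abel
    have hDm : c2m D = V.γ * c2m P - c2m P * V.γ + V.σ2 * c2m Q - c2m Q * V.σ2
        + V.σ2 * (c2m P * c2m P) - c2m P * (V.σ2 * c2m P) := by
      rw [hDc]
      simp only [c2m_sub, c2m_add, c2m_comp, c2m_m2c]
    rw [hent 0 0, hent 1 1, hDm, hH0p, hγ, hσ2]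
    generalize c2m P = Pm
    generalize c2m Q = Qm
    rw [Matrix.eta_fin_two Pm, Matrix.eta_fin_two Qm]
    clear_value P Q D
    clear * -
    simp [Matrix.mul_apply, Fin.sum_univ_two]
    ring
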